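/- Let d ∈ ℕ, σ > 0, x̂, r : Fin d → ℝ with r ≠ 0, and l > 0. Let μ := Measure.pi (fun i => ProbabilityTheory.gaussianReal (x̂ i) (σ²)). Then (μ {z | Real.exp (−(∑ i, (z i − x̂ i) * r i) / σ² − (∑ i, (r i)²) / (2 * σ²)) > l}).toReal = 1 − Φ(σ * (Real.log l + (∑ i, (r i)²) / (2 * σ²)) / ‖r‖₂), where ‖r‖₂ = √(∑ i, (r i)²). -/

import Mathlib

open MeasureTheory
open scoped ENNReal NNReal

open Real ProbabilityTheory in
private lemma gaussianPDFReal_conv' (a b : ℝ) {u w : ℝ≥0} (hu : u ≠ 0) (hw : w ≠ 0) (t : ℝ) :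
    ∫ x, gaussianPDFReal a u x * gaussianPDFReal b w (t - x)
      = gaussianPDFReal (a + b) (u + w) t := by
  have hU : (0:ℝ) < u := by positivity
  have hW : (0:ℝ) < w := by positivity
  set U := (u:ℝ) with hUdef
  set W := (w:ℝ) with hWdef
  set k : ℝ := (U + W) / (2 * U * W) with hk
  set x0 : ℝ := a + U * (t - a - b) / (U + W) with hx0
  have hkpos : 0 < k := by positivity
  have key : ∀ x, gaussianPDFReal a u x * gaussianPDFReal b w (t - x)
      = ((√(2*π*U))⁻¹ * (√(2*π*W))⁻¹ * rexp (-(t-a-b)^2/(2*(U+W))))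
          * rexp (-k*(x-x0)^2) := by
    intro x
    have hexp : -(x-a)^2/(2*U) + -(t-x-b)^2/(2*W)
        = -(t-a-b)^2/(2*(U+W)) + -k*(x-x0)^2 := by
      rw [hk, hx0]; field_simp; ring
    have h1 : gaussianPDFReal a u x * gaussianPDFReal b w (t - x)
        = (√(2*π*U))⁻¹ * (√(2*π*W))⁻¹ * rexp (-(x-a)^2/(2*U) + -(t-x-b)^2/(2*W)) := by
      unfold gaussianPDFReal
      rw [Real.exp_add]; ring
    rw [h1, hexp, Real.exp_add]; ring
  simp only [key]
  rw [MeasureTheory.integral_const_mul]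
  have hsub : ∫ x, rexp (-k*(x-x0)^2) = ∫ x, rexp (-k*x^2) :=
    integral_sub_right_eq_self (fun x => rexp (-k*x^2)) x0
  rw [hsub, integral_gaussian]
  have hconst : (√(2*π*U))⁻¹ * (√(2*π*W))⁻¹ * √(π/k) = (√(2*π*(U+W)))⁻¹ := by
    rw [← Real.sqrt_inv, ← Real.sqrt_inv, ← Real.sqrt_mul (by positivity),
      ← Real.sqrt_mul (by positivity), ← Real.sqrt_inv]
    congr 1
    rw [hk]
    have hπ : π ≠ 0 := pi_ne_zero
    field_simp
  rw [show (√(2*π*U))⁻¹ * (√(2*π*W))⁻¹ * rexp (-(t-a-b)^2/(2*(U+W))) * √(π/k)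
      = ((√(2*π*U))⁻¹ * (√(2*π*W))⁻¹ * √(π/k)) * rexp (-(t-a-b)^2/(2*(U+W))) from by ring,
    hconst]
  unfold gaussianPDFReal
  push_cast
  ring_nf
  rfl

open Real ProbabilityTheory in
private lemma integrable_pdf_mul' (a b : ℝ) (u w : ℝ≥0) (t : ℝ) :
    Integrable (fun x => gaussianPDFReal a u x * gaussianPDFReal b w (t - x)) := by
  refine Integrable.mono' ((integrable_gaussianPDFReal a u).mul_const ((√(2*π*w))⁻¹)) ?_ ?_
  · exact ((stronglyMeasurable_gaussianPDFReal a u).mul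
      ((stronglyMeasurable_gaussianPDFReal b w).comp_measurable (by fun_prop))).aestronglyMeasurable
  · refine Filter.Eventually.of_forall fun x => ?_
    rw [Real.norm_of_nonneg (mul_nonneg (gaussianPDFReal_nonneg _ _ _) (gaussianPDFReal_nonneg _ _ _))]
    refine mul_le_mul_of_nonneg_left ?_ (gaussianPDFReal_nonneg _ _ _)
    unfold gaussianPDFReal
    have h1 : rexp (-(t - x - b)^2 / (2*(w:ℝ))) ≤ 1 := by
      rw [Real.exp_le_one_iff]
      rcases eq_or_ne w 0 with h|h
      · simp [h]
      · have : (0:ℝ) < w := by positivity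
        have := sq_nonneg (t - x - b)
        rw [div_nonpos_iff]; right; constructor <;> nlinarith
    calc (√(2*π*w))⁻¹ * rexp (-(t - x - b)^2 / (2*(w:ℝ)))
        ≤ (√(2*π*w))⁻¹ * 1 := mul_le_mul_of_nonneg_left h1 (by positivity)
      _ = (√(2*π*w))⁻¹ := mul_one _

open Real ProbabilityTheory in
private lemma lintegral_gaussianPDF_conv' (a b : ℝ) {u w : ℝ≥0} (hu : u ≠ 0) (hw : w ≠ 0) (t : ℝ) :
    ∫⁻ x, gaussianPDF a u x * gaussianPDF b w (t - x) = gaussianPDF (a + b) (u + w) t := by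
  simp only [gaussianPDF]
  simp_rw [← ENNReal.ofReal_mul (gaussianPDFReal_nonneg a u _)]
  rw [← ofReal_integral_eq_lintegral_ofReal (integrable_pdf_mul' a b u w t)
    (Filter.Eventually.of_forall fun x => mul_nonneg (gaussianPDFReal_nonneg _ _ _)
      (gaussianPDFReal_nonneg _ _ _)),
    gaussianPDFReal_conv' a b hu hw t]

open Real ProbabilityTheory in
private lemma gaussianReal_conv' (a b : ℝ) (u w : ℝ≥0) :
    ((gaussianReal a u).prod (gaussianReal b w)).map (fun p : ℝ × ℝ => p.1 + p.2)
      = gaussianReal (a + b) (u + w) := by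
  rcases eq_or_ne u 0 with hu | hu
  · rw [hu, gaussianReal_zero_var, Measure.dirac_prod, Measure.map_map (by fun_prop) (by fun_prop)]
    have : ((fun p : ℝ × ℝ => p.1 + p.2) ∘ Prod.mk a) = (a + ·) := rfl
    rw [this, gaussianReal_map_const_add, zero_add, add_comm b a]
  rcases eq_or_ne w 0 with hw | hw
  · rw [hw, gaussianReal_zero_var, Measure.prod_dirac, Measure.map_map (by fun_prop) (by fun_prop)]
    have : ((fun p : ℝ × ℝ => p.1 + p.2) ∘ (fun x => (x, b))) = (· + b) := rfl
    rw [this, gaussianReal_map_add_const, add_zero]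
  ext s hs
  rw [Measure.map_apply (by fun_prop) hs,
    Measure.prod_apply (hs.preimage (by fun_prop))]
  have hslice : ∀ x : ℝ, (Prod.mk x ⁻¹' ((fun p : ℝ × ℝ => p.1 + p.2) ⁻¹' s))
      = (fun y => x + y) ⁻¹' s := fun x => rfl
  simp only [hslice]
  have hmeas : ∀ x : ℝ, MeasurableSet ((fun y => x + y) ⁻¹' s) :=
    fun x => hs.preimage (by fun_prop)
  have hstep1 : ∀ x : ℝ, gaussianReal b w ((fun y => x + y) ⁻¹' s)
      = ∫⁻ y, s.indicator (fun z => gaussianPDF b w (z - x)) y := by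
    intro x
    rw [gaussianReal_of_var_ne_zero b hw, withDensity_apply _ (hmeas x),
      ← lintegral_indicator (hmeas x)]
    rw [← lintegral_add_left_eq_self (s.indicator (fun z => gaussianPDF b w (z - x))) x]
    congr 1 with y
    by_cases hy : x + y ∈ s
    · rw [Set.indicator_of_mem hy, Set.indicator_of_mem (by exact hy)]
      simp
    · rw [Set.indicator_of_notMem hy, Set.indicator_of_notMem (by exact hy)]
  simp only [hstep1]
  rw [gaussianReal_of_var_ne_zero a hu,
    lintegral_withDensity_eq_lintegral_mul _ (measurable_gaussianPDF a u) (by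
      apply Measurable.lintegral_prod_right
      exact ((measurable_gaussianPDF b w).comp (by fun_prop)).indicator (hs.preimage (by fun_prop)))]
  have hmeasI : ∀ x : ℝ, Measurable (s.indicator (fun z => gaussianPDF b w (z - x))) :=
    fun x => ((measurable_gaussianPDF b w).comp (by fun_prop)).indicator hs
  have hpull : ∀ x : ℝ, gaussianPDF a u x * ∫⁻ y, s.indicator (fun z => gaussianPDF b w (z - x)) y
      = ∫⁻ y, gaussianPDF a u x * s.indicator (fun z => gaussianPDF b w (z - x)) y :=
    fun x => (lintegral_const_mul _ (hmeasI x)).symm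
  simp only [Pi.mul_apply]
  simp_rw [hpull]
  rw [lintegral_lintegral_swap (by
    apply Measurable.aemeasurable
    apply Measurable.mul ((measurable_gaussianPDF a u).comp measurable_fst)
    have : (fun p : ℝ × ℝ => Set.indicator s (fun z => gaussianPDF b w (z - p.1)) p.2)
        = Set.indicator {p : ℝ × ℝ | p.2 ∈ s} (fun p : ℝ × ℝ => gaussianPDF b w (p.2 - p.1)) := by
      ext p
      by_cases hp : p.2 ∈ s
      · rw [Set.indicator_of_mem hp, Set.indicator_of_mem (by exact hp)]
      · rw [Set.indicator_of_notMem hp, Set.indicator_of_notMem (by exact hp)]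
    rw [this]
    exact ((measurable_gaussianPDF b w).comp (by fun_prop)).indicator
      (measurable_snd hs))]
  have hinner : ∀ y : ℝ, ∫⁻ x, gaussianPDF a u x * s.indicator (fun z => gaussianPDF b w (z - x)) y
      = s.indicator (gaussianPDF (a+b) (u+w)) y := by
    intro y
    by_cases hy : y ∈ s
    · simp only [Set.indicator_of_mem hy]
      exact lintegral_gaussianPDF_conv' a b hu hw y
    · simp [Set.indicator_of_notMem hy]
  simp_rw [hinner]
  rw [lintegral_indicator hs, ← withDensity_apply _ hs,
    ← gaussianReal_of_var_ne_zero _ (by simp [hu])]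

open Real ProbabilityTheory in
private lemma pi_gaussian_sum' : ∀ (d : ℕ) (m : Fin d → ℝ) (v : Fin d → ℝ≥0),
    (Measure.pi fun i => gaussianReal (m i) (v i)).map (fun z => ∑ i, z i)
      = gaussianReal (∑ i, m i) (∑ i, v i) := by
  intro d
  induction d with
  | zero =>
    intro m v
    simp only [Finset.univ_eq_empty, Finset.sum_empty]
    rw [show (fun z : Fin 0 → ℝ => (0:ℝ)) = fun _ => 0 from rfl, Measure.map_const,
      measure_univ, one_smul, gaussianReal_zero_var]
  | succ n ih =>
    intro m v
    set e := MeasurableEquiv.piFinSuccAbove (fun _ : Fin (n+1) => ℝ) 0 with he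
    have hmp := (measurePreserving_piFinSuccAbove (fun i => gaussianReal (m i) (v i)) 0).map_eq
    have hsum : (fun z : Fin (n+1) → ℝ => ∑ i, z i)
        = (fun p : ℝ × (Fin n → ℝ) => p.1 + ∑ j, p.2 j) ∘ e := by
      funext z
      simp only [Function.comp_apply, he, MeasurableEquiv.piFinSuccAbove_apply]
      rw [Fin.sum_univ_succ]
      simp [Fin.removeNth, Fin.succAbove, Fin.tail]
    rw [hsum, ← Measure.map_map (by fun_prop) e.measurable, hmp]
    have hdecomp : (fun p : ℝ × (Fin n → ℝ) => p.1 + ∑ j, p.2 j)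
        = (fun p : ℝ × ℝ => p.1 + p.2) ∘ (Prod.map id (fun y : Fin n → ℝ => ∑ j, y j)) := rfl
    rw [hdecomp, ← Measure.map_map (by fun_prop) (by fun_prop),
      ← Measure.map_prod_map _ _ measurable_id (by fun_prop), Measure.map_id, ih,
      gaussianReal_conv', Fin.sum_univ_succ (f := m), Fin.sum_univ_succ (f := v)]
    rfl

/-- The standard normal CDF. -/
noncomputable def stdNormalCDF (t : ℝ) : ℝ :=
  ((ProbabilityTheory.gaussianReal 0 1) (Set.Iic t)).toReal

/-- Type-I error formula for the Gaussian likelihood-ratio test: under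
`Z ∼ N(x̂, σ²I_d)`, the probability that the likelihood ratio
`Λ(Z) = exp(⟨Z − x̂, −r⟩/σ² − ‖r‖²/(2σ²))` exceeds `l` equals
`1 − Φ((log l + ½‖r‖²/σ²)·σ/‖r‖₂)`. -/
theorem gaussian_LR_tail (d : ℕ) (σ : ℝ≥0) (hσ : 0 < σ)
    (xhat r : Fin d → ℝ) (hr : r ≠ 0) (l : ℝ) (hl : 0 < l) :
    ((Measure.pi fun i => ProbabilityTheory.gaussianReal (xhat i) (σ ^ 2))
        {z : Fin d → ℝ |
          Real.exp (-(∑ i, (z i - xhat i) * r i) / (σ : ℝ) ^ 2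
              - (∑ i, (r i) ^ 2) / (2 * (σ : ℝ) ^ 2)) > l}).toReal
      = 1 - stdNormalCDF ((σ : ℝ) * (Real.log l + (∑ i, (r i) ^ 2) / (2 * (σ : ℝ) ^ 2))
            / Real.sqrt (∑ i, (r i) ^ 2)) := by
  classical
  set S : ℝ := ∑ i, (r i) ^ 2 with hS
  have hσR : (0:ℝ) < (σ:ℝ) := by exact_mod_cast hσ
  have hσ2 : (0:ℝ) < (σ:ℝ)^2 := by positivity
  have hSpos : 0 < S := by
    obtain ⟨i, hi⟩ := Function.ne_iff.mp hr
    have h1 : (r i)^2 ≤ S := Finset.single_le_sum (fun j _ => sq_nonneg (r j)) (Finset.mem_univ i)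
    have h2 : 0 < (r i)^2 := lt_of_le_of_ne (sq_nonneg _) (Ne.symm (pow_ne_zero 2 hi))
    linarith
  set t : ℝ := Real.log l * (σ:ℝ)^2 + S / 2 with ht
  set f : (Fin d → ℝ) → ℝ := fun z => ∑ i, (z i - xhat i) * (-(r i)) with hf
  have hfmeas : Measurable f := by
    apply Finset.measurable_sum
    intro i _
    fun_prop
  -- set equality
  have hset : {z : Fin d → ℝ |
      Real.exp (-(∑ i, (z i - xhat i) * r i) / (σ : ℝ) ^ 2
          - (∑ i, (r i) ^ 2) / (2 * (σ : ℝ) ^ 2)) > l} = f ⁻¹' Set.Ioi t := by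
    ext z
    simp only [Set.mem_setOf_eq, Set.mem_preimage, Set.mem_Ioi, gt_iff_lt]
    rw [← Real.log_lt_iff_lt_exp hl]
    have hfz : f z = -(∑ i, (z i - xhat i) * r i) := by
      rw [hf]
      simp only [mul_neg]
      rw [Finset.sum_neg_distrib]
    have hkey : -(∑ i, (z i - xhat i) * r i) / (σ:ℝ)^2 - (∑ i, (r i)^2) / (2*(σ:ℝ)^2)
        - Real.log l = (f z - t) / (σ:ℝ)^2 := by
      rw [hfz, ht, hS]
      field_simp
      ring
    rw [← sub_pos, hkey, lt_div_iff₀ hσ2, zero_mul, sub_pos]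
  -- the mapped measure
  set gfun : (i : Fin d) → ℝ → ℝ := fun i x => (x - xhat i) * (-(r i)) with hgfun
  set nn : Fin d → ℝ≥0 := fun i => Real.toNNReal ((r i)^2) with hnn
  have hg : ∀ i, MeasurePreserving (gfun i)
      (ProbabilityTheory.gaussianReal (xhat i) (σ^2))
      (ProbabilityTheory.gaussianReal 0 (nn i * σ^2)) := by
    intro i
    refine ⟨by rw [hgfun]; fun_prop, ?_⟩
    have h1 : gfun i = (· * (-(r i))) ∘ (· + (-(xhat i))) := by
      funext x; simp [hgfun, sub_eq_add_neg]
    rw [h1, ← Measure.map_map (by fun_prop) (by fun_prop),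
      ProbabilityTheory.gaussianReal_map_add_const,
      ProbabilityTheory.gaussianReal_map_mul_const]
    rw [show xhat i + -xhat i = 0 from by ring, mul_zero]
    congr 1
    apply NNReal.coe_injective
    simp [hnn, neg_sq, Real.coe_toNNReal _ (sq_nonneg (r i))]
  have hmap : (Measure.pi fun i => ProbabilityTheory.gaussianReal (xhat i) (σ^2)).map f
      = ProbabilityTheory.gaussianReal 0 (∑ i, nn i * σ^2) := by
    have hcomp : f = (fun y : Fin d → ℝ => ∑ i, y i)
        ∘ (fun (z : Fin d → ℝ) (i : Fin d) => gfun i (z i)) := rfl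
    rw [hcomp, ← Measure.map_map (by
        apply Finset.measurable_sum
        intro i _
        fun_prop) (measurePreserving_pi _ _ hg).measurable,
      (measurePreserving_pi _ _ hg).map_eq, pi_gaussian_sum']
    simp
  set V : ℝ≥0 := ∑ i, nn i * σ^2 with hV
  have hVR : (V:ℝ) = S * (σ:ℝ)^2 := by
    rw [hV, hS]
    push_cast
    rw [Finset.sum_mul]
    refine Finset.sum_congr rfl fun i _ => ?_
    rw [hnn]
    simp [Real.coe_toNNReal _ (sq_nonneg (r i))]
  have hVpos : (0:ℝ) < (V:ℝ) := by rw [hVR]; positivity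
  have hVne : V ≠ 0 := by
    intro h
    rw [h] at hVpos
    simp at hVpos
  have hcpos : (0:ℝ) < Real.sqrt (V:ℝ) := Real.sqrt_pos.mpr hVpos
  have hstd : ProbabilityTheory.gaussianReal 0 V
      = (ProbabilityTheory.gaussianReal 0 1).map (fun x => Real.sqrt (V:ℝ) * x) := by
    rw [show (fun x : ℝ => Real.sqrt (V:ℝ) * x) = (Real.sqrt (V:ℝ) * ·) from rfl,
      ProbabilityTheory.gaussianReal_map_const_mul, mul_zero, mul_one]
    congr 1
    apply NNReal.coe_injective
    simp [Real.sq_sqrt (le_of_lt hVpos)]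
  have hmeasure : ((Measure.pi fun i => ProbabilityTheory.gaussianReal (xhat i) (σ ^ 2))
      {z : Fin d → ℝ | Real.exp (-(∑ i, (z i - xhat i) * r i) / (σ : ℝ) ^ 2
          - (∑ i, (r i) ^ 2) / (2 * (σ : ℝ) ^ 2)) > l})
      = ProbabilityTheory.gaussianReal 0 1 (Set.Ioi (t / Real.sqrt (V:ℝ))) := by
    rw [hset, ← Measure.map_apply hfmeas measurableSet_Ioi, hmap, hstd,
      Measure.map_apply (by fun_prop) measurableSet_Ioi,
      Set.preimage_const_mul_Ioi₀ _ hcpos]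
  rw [hmeasure, ← Set.compl_Iic, prob_compl_eq_one_sub measurableSet_Iic,
    ENNReal.toReal_sub_of_le prob_le_one ENNReal.one_ne_top, ENNReal.toReal_one]
  have harg : t / Real.sqrt (V:ℝ)
      = (σ : ℝ) * (Real.log l + S / (2 * (σ : ℝ) ^ 2)) / Real.sqrt S := by
    have hsq : Real.sqrt (V:ℝ) = Real.sqrt S * (σ:ℝ) := by
      rw [hVR, Real.sqrt_mul (le_of_lt hSpos), Real.sqrt_sq (le_of_lt hσR)]
    have hsS : (0:ℝ) < Real.sqrt S := Real.sqrt_pos.mpr hSpos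
    rw [hsq, ht]
    field_simp
  rw [harg]
  rfl
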